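/- Under the same multiplicative-weights setup with rewards in [-1,1] and 0 < ℓ ≤ 1/2, for every probability distribution P on the N experts: ∑_{k=1}^K ∑_i Q_k(i) u_{i,k} ≥ ∑_{k=1}^K ∑_i P(i)(u_{i,k} − ℓ|u_{i,k}|) − (ln N)/ℓ. -/

import Mathlib

open Finset

lemma hd_aux (x : ℝ) (hx : 1 + x ≠ 0) :
    HasDerivAt (fun y : ℝ => Real.log (1 + y) - (y - y^2)) ((1+x)⁻¹ - (1 - 2*x)) x := by
  have h1 : HasDerivAt (fun y : ℝ => 1 + y) 1 x := (hasDerivAt_id x).const_add 1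
  have h2 := h1.log hx
  have h3 : HasDerivAt (fun y : ℝ => y - y^2) (1 - 2*x) x := by
    have h4 : HasDerivAt (fun y : ℝ => y - y^2) (1 - 2 * x^(2-1)) x :=
      (hasDerivAt_id' x).fun_sub (hasDerivAt_pow 2 x)
    simpa using h4
  simpa [one_div] using h2.fun_sub h3

lemma log_one_add_ge_neg (x : ℝ) (hx : x ∈ Set.Icc (-(1/2) : ℝ) 0) :
    x - x^2 ≤ Real.log (1 + x) := by
  have key : AntitoneOn (fun x : ℝ => Real.log (1+x) - (x - x^2)) (Set.Icc (-(1/2)) 0) := by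
    apply antitoneOn_of_deriv_nonpos (convex_Icc _ _)
    · apply ContinuousOn.sub
      · apply ContinuousOn.log (by fun_prop)
        intro y hy
        have := hy.1
        intro hc
        simp only [Set.mem_Icc] at hy
        nlinarith [hy.1]
      · fun_prop
    · intro y hy
      rw [interior_Icc] at hy
      have hne : 1 + y ≠ 0 := by
        simp only [Set.mem_Ioo] at hy
        nlinarith [hy.1]
      exact (hd_aux y hne).differentiableAt.differentiableWithinAt
    · intro y hy
      rw [interior_Icc] at hy
      simp only [Set.mem_Ioo] at hy
      have hp : (0:ℝ) < 1 + y := by nlinarith [hy.1]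
      rw [(hd_aux y hp.ne').deriv]
      have hinv : (1+y)⁻¹ * (1+y) = 1 := inv_mul_cancel₀ hp.ne'
      nlinarith [hy.1, hy.2, hp]
  have h0 : (0:ℝ) ∈ Set.Icc (-(1/2) : ℝ) 0 := by constructor <;> norm_num
  have := key hx h0 hx.2
  simp only [add_zero, Real.log_one] at this
  linarith

lemma log_one_add_ge (x : ℝ) (hx : |x| ≤ 1/2) : x - x^2 ≤ Real.log (1 + x) := by
  have hx1 : -(1/2) ≤ x := neg_le_of_abs_le hx
  have hx2 : x ≤ 1/2 := le_of_abs_le hx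
  have hpos : (0:ℝ) < 1 + x := by linarith
  rcases le_or_gt 0 x with h | h
  · have h1 : Real.log ((1+x)⁻¹) ≤ (1+x)⁻¹ - 1 :=
      Real.log_le_sub_one_of_pos (by positivity)
    rw [Real.log_inv] at h1
    have h2 : x - x^2 ≤ 1 - (1+x)⁻¹ := by
      have : (1:ℝ) - (1+x)⁻¹ = x / (1+x) := by field_simp; ring
      rw [this, le_div_iff₀ hpos]; nlinarith
    linarith
  · exact log_one_add_ge_neg x ⟨hx1, h.le⟩

/-- Multiplicative weights guarantee against any fixed distribution `P` on the
experts: `∑_k ∑_i Q_k(i) u_{i,k} ≥ ∑_k ∑_i P(i)(u_{i,k} − ℓ|u_{i,k}|) − (ln N)/ℓ`. -/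
theorem stmt10 (N : ℕ) (hN : 1 ≤ N) (ℓ : ℝ) (hℓ0 : 0 < ℓ) (hℓ : ℓ ≤ 1 / 2)
    (u : ℕ → Fin N → ℝ) (hu : ∀ k i, u k i ∈ Set.Icc (-1 : ℝ) 1)
    (w : ℕ → Fin N → ℝ)
    (hw0 : ∀ i, w 0 i = 1)
    (hwsucc : ∀ k i, w (k + 1) i = (1 + ℓ * u k i) * w k i)
    (Q : ℕ → Fin N → ℝ) (hQ : ∀ k i, Q k i = w k i / ∑ j, w k j)
    (K : ℕ) (P : Fin N → ℝ) (hP0 : ∀ i, 0 ≤ P i) (hP1 : ∑ i, P i = 1) :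
    (∑ k ∈ Finset.range K, ∑ i, Q k i * u k i) ≥
      (∑ k ∈ Finset.range K, ∑ i, P i * (u k i - ℓ * |u k i|))
        - Real.log N / ℓ := by
  have hNe : Nonempty (Fin N) := ⟨⟨0, hN⟩⟩
  set W : ℕ → ℝ := fun k => ∑ i, w k i with hW
  have hupos : ∀ k i, 0 < 1 + ℓ * u k i := by
    intro k i
    have h1 := (hu k i).1
    have h2 := (hu k i).2
    nlinarith
  have hwpos : ∀ k i, 0 < w k i := by
    intro k
    induction k with
    | zero => intro i; rw [hw0]; norm_num
    | succ k ih => intro i; rw [hwsucc]; exact mul_pos (hupos k i) (ih i)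
  have hWpos : ∀ k, 0 < W k :=
    fun k => Finset.sum_pos (fun i _ => hwpos k i) Finset.univ_nonempty
  -- step inequality
  have hstep : ∀ k, Real.log (W (k+1)) - Real.log (W k) ≤ ℓ * ∑ i, Q k i * u k i := by
    intro k
    have hQu : ∑ i, Q k i * u k i = (∑ i, u k i * w k i) / W k := by
      rw [Finset.sum_div]
      refine Finset.sum_congr rfl fun i _ => ?_
      rw [hQ]
      field_simp
      ring
    have h1 : W (k+1) = W k + ℓ * ∑ i, u k i * w k i := by
      simp only [hW]
      rw [Finset.mul_sum, ← Finset.sum_add_distrib]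
      exact Finset.sum_congr rfl fun i _ => by rw [hwsucc]; ring
    have hWsucc : W (k+1) = W k * (1 + ℓ * ∑ i, Q k i * u k i) := by
      rw [hQu, h1]
      field_simp [(hWpos k).ne']
    have hpos2 : 0 < 1 + ℓ * ∑ i, Q k i * u k i := by
      by_contra h
      push_neg at h
      nlinarith [hWpos (k+1), hWpos k, hWsucc]
    rw [hWsucc, Real.log_mul (hWpos k).ne' hpos2.ne']
    have := Real.log_le_sub_one_of_pos hpos2
    linarith
  have hlog : ∀ n i, Real.log (w n i) = ∑ k ∈ Finset.range n, Real.log (1 + ℓ * u k i) := by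
    intro n i
    induction n with
    | zero => simp [hw0]
    | succ n ih =>
        rw [hwsucc, Real.log_mul (hupos n i).ne' (hwpos n i).ne',
          Finset.sum_range_succ, ih]
        ring
  have hsum1 : Real.log (W K) - Real.log (W 0) ≤
      ℓ * ∑ k ∈ Finset.range K, ∑ i, Q k i * u k i := by
    rw [← Finset.sum_range_sub (fun k => Real.log (W k)), Finset.mul_sum]
    exact Finset.sum_le_sum fun k _ => hstep k
  have hW0 : W 0 = (N : ℝ) := by
    simp [hW, hw0]
  -- lower bound via P
  have hlow : ∀ i, ℓ * ∑ k ∈ Finset.range K, (u k i - ℓ * |u k i|) ≤ Real.log (w K i) := by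
    intro i
    rw [hlog K i, Finset.mul_sum]
    refine Finset.sum_le_sum fun k _ => ?_
    have habs1 : |u k i| ≤ 1 := abs_le.mpr ⟨(hu k i).1, (hu k i).2⟩
    have hx : |ℓ * u k i| ≤ 1/2 := by
      rw [abs_mul, abs_of_pos hℓ0]
      nlinarith
    have h1 := log_one_add_ge (ℓ * u k i) hx
    have habs2 : (u k i)^2 ≤ |u k i| := by
      nlinarith [sq_abs (u k i), abs_nonneg (u k i)]
    nlinarith [mul_le_mul_of_nonneg_left habs2 (sq_nonneg ℓ)]
  have hsum2 : ℓ * ∑ k ∈ Finset.range K, ∑ i, P i * (u k i - ℓ * |u k i|) ≤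
      Real.log (W K) := by
    rw [Finset.sum_comm]
    calc ℓ * ∑ i, ∑ k ∈ Finset.range K, P i * (u k i - ℓ * |u k i|)
        = ∑ i, P i * (ℓ * ∑ k ∈ Finset.range K, (u k i - ℓ * |u k i|)) := by
          rw [Finset.mul_sum]
          refine Finset.sum_congr rfl fun i _ => ?_
          simp only [Finset.mul_sum]
          exact Finset.sum_congr rfl fun k _ => by ring
      _ ≤ ∑ i, P i * Real.log (w K i) :=
          Finset.sum_le_sum fun i _ => mul_le_mul_of_nonneg_left (hlow i) (hP0 i)
      _ ≤ ∑ i, P i * Real.log (W K) := by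
          refine Finset.sum_le_sum fun i _ => mul_le_mul_of_nonneg_left ?_ (hP0 i)
          apply Real.log_le_log (hwpos K i)
          exact Finset.single_le_sum (fun j _ => (hwpos K j).le) (Finset.mem_univ i)
      _ = Real.log (W K) := by rw [← Finset.sum_mul, hP1, one_mul]
  -- combine
  rw [hW0] at hsum1
  have hcancel : Real.log N / ℓ * ℓ = Real.log N := div_mul_cancel₀ _ hℓ0.ne'
  nlinarith [hsum1, hsum2, hℓ0]
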